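/- Let M be a smooth manifold, H a closed (n+1)-form, 𝔤 a Lie algebra acting by vector fields a ↦ X_a with L_{X_a}H = 0, and suppose ξ_a ∈ Ω^{n-1}(M) depend linearly on a and satisfy dξ_a + ι_{X_a}H = 0 and L_{X_a}ξ_b = ξ_{[a,b]}. Then the functions c_{a,b} := ι_{X_a}ξ_b + ι_{X_b}ξ_a are locally constant (i.e. d c_{a,b} = 0). -/
import Mathlib


/-- Abstract Cartan calculus: a Lie algebra `V` of "vector fields" acting on an
ℝ-module `Ω` of "differential forms" by Lie derivative `lie` and contraction `iota`,
with the de Rham differential `d`, satisfying the standard Cartan identities. -/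
structure CartanCtx (V Ω : Type*) [LieRing V] [Module ℝ V]
    [AddCommGroup Ω] [Module ℝ Ω] where
  d : Ω →ₗ[ℝ] Ω
  iota : V →ₗ[ℝ] Ω →ₗ[ℝ] Ω
  lie : V →ₗ[ℝ] Ω →ₗ[ℝ] Ω
  d_d : ∀ ω, d (d ω) = 0
  cartan : ∀ x ω, lie x ω = d (iota x ω) + iota x (d ω)
  lie_d : ∀ x ω, lie x (d ω) = d (lie x ω)
  lie_iota : ∀ x y ω, lie x (iota y ω) - iota y (lie x ω) = iota ⁅x, y⁆ ω
  lie_lie : ∀ x y ω, lie x (lie y ω) - lie y (lie x ω) = lie ⁅x, y⁆ ω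
  iota_iota : ∀ x y ω, iota x (iota y ω) = -iota y (iota x ω)

/-- Let `𝔤` act by vector fields `a ↦ X_a` on `M` with `L_{X_a}H = 0`
for a closed `(n+1)`-form `H`, and let `a ↦ ξ_a ∈ Ω^{n-1}(M)` be linear with
`dξ_a + ι_{X_a}H = 0` and `L_{X_a}ξ_b = ξ_{[a,b]}`.  Then the functions
`c_{a,b} = ι_{X_a}ξ_b + ι_{X_b}ξ_a` are locally constant, i.e. `d c_{a,b} = 0`. -/
theorem stmt12 {V Ω 𝔤 : Type*} [LieRing V] [Module ℝ V] [AddCommGroup Ω] [Module ℝ Ω]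
    [LieRing 𝔤] [Module ℝ 𝔤]
    (C : CartanCtx V Ω) (H : Ω) (hH : C.d H = 0)
    (Xv : 𝔤 →ₗ[ℝ] V) (hXv : ∀ a b, Xv ⁅a, b⁆ = ⁅Xv a, Xv b⁆)
    (ξ : 𝔤 →ₗ[ℝ] Ω)
    (hinv : ∀ a : 𝔤, C.lie (Xv a) H = 0)
    (hham : ∀ a : 𝔤, C.d (ξ a) + C.iota (Xv a) H = 0)
    (hequiv : ∀ a b : 𝔤, C.lie (Xv a) (ξ b) = ξ ⁅a, b⁆) :
    ∀ a b : 𝔤, C.d (C.iota (Xv a) (ξ b) + C.iota (Xv b) (ξ a)) = 0 := by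
  intro a b
  have hda : C.d (ξ a) = -C.iota (Xv a) H := eq_neg_of_add_eq_zero_left (hham a)
  have hdb : C.d (ξ b) = -C.iota (Xv b) H := eq_neg_of_add_eq_zero_left (hham b)
  have h1 : C.d (C.iota (Xv a) (ξ b)) = C.lie (Xv a) (ξ b) - C.iota (Xv a) (C.d (ξ b)) := by
    rw [C.cartan]; abel
  have h2 : C.d (C.iota (Xv b) (ξ a)) = C.lie (Xv b) (ξ a) - C.iota (Xv b) (C.d (ξ a)) := by
    rw [C.cartan]; abel
  have hsum : C.lie (Xv a) (ξ b) + C.lie (Xv b) (ξ a) = 0 := by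
    rw [hequiv, hequiv, ← lie_skew a b, map_neg]; abel
  rw [map_add, h1, h2, hda, hdb, map_neg, map_neg, C.iota_iota (Xv a) (Xv b)]
  rw [neg_neg]
  linear_combination (norm := abel) hsum
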